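/- In the one-period market with prices y ∈ L^0(ℝ^d, H) and Y ∈ L^0(ℝ^d, F), suppose g : Ω × ℝ^d → ℝ is an H-normal integrand. Then for every θ ∈ L^0(ℝ^d, H), almost surely esssup_H( g(Y) − θ·Y ) = sup_{z ∈ supp_H Y} ( g(z) − θ·z ) = f*(−θ), where f(ω, z) := −g(ω, z) + δ_{supp_H Y(ω)}(z) (with δ_C(z) = 0 if z ∈ C and +∞ otherwise) and f*(ω, x) := sup_{z ∈ ℝ^d} ( x·z − f(ω, z) ) is its Fenchel–Legendre conjugate. -/

import Mathlib

open MeasureTheory Set Filter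
open scoped Classical

noncomputable section

/-- Scalar product on `ℝ^d`. -/
def dotp {d : ℕ} (a b : Fin d → ℝ) : ℝ := ∑ i, a i * b i

/-- `κ` is a regular version of the conditional law of `X` knowing the σ-algebra `H`. -/
structure CondLaw {Ω : Type*} (H : MeasurableSpace Ω) {mΩ : MeasurableSpace Ω}
    (μ : Measure Ω) {E : Type*} [MeasurableSpace E] (X : Ω → E) (κ : Ω → Measure E) :
    Prop where
  isProb : ∀ ω, IsProbabilityMeasure (κ ω)
  meas : ∀ A : Set E, MeasurableSet A → Measurable[H] fun ω => κ ω A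
  law : ∀ A : Set E, MeasurableSet A → ∀ B : Set Ω, MeasurableSet[H] B →
    ∫⁻ ω in B, κ ω A ∂μ = μ (B ∩ X ⁻¹' A)

/-- The support of the measure `κ ω`: the intersection of all closed sets of full
measure (for a regular conditional law this is the conditional support). -/
def condSupp {Ω E : Type*} [TopologicalSpace E] [MeasurableSpace E]
    (κ : Ω → Measure E) (ω : Ω) : Set E :=
  ⋂₀ {A : Set E | IsClosed A ∧ κ ω A = 1}

/-- `γ` is (a version of) the conditional essential supremum of `X` knowing `H`. -/
def IsCondEssSup {Ω : Type*} (H : MeasurableSpace Ω) {mΩ : MeasurableSpace Ω}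
    (μ : Measure Ω) (X : Ω → ℝ) (γ : Ω → EReal) : Prop :=
  Measurable[H] γ ∧ (∀ᵐ ω ∂μ, (X ω : EReal) ≤ γ ω) ∧
    ∀ ζ : Ω → EReal, Measurable[H] ζ → (∀ᵐ ω ∂μ, (X ω : EReal) ≤ ζ ω) →
      ∀ᵐ ω ∂μ, γ ω ≤ ζ ω

/-- `γ` is (a version of) the conditional essential infimum of `X` knowing `H`. -/
def IsCondEssInf {Ω : Type*} (H : MeasurableSpace Ω) {mΩ : MeasurableSpace Ω}
    (μ : Measure Ω) (X : Ω → ℝ) (γ : Ω → EReal) : Prop :=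
  Measurable[H] γ ∧ (∀ᵐ ω ∂μ, γ ω ≤ (X ω : EReal)) ∧
    ∀ ζ : Ω → EReal, Measurable[H] ζ → (∀ᵐ ω ∂μ, ζ ω ≤ (X ω : EReal)) →
      ∀ᵐ ω ∂μ, ζ ω ≤ γ ω

/-- `p` is (a version of) the essential infimum of the family `S` of random variables. -/
def IsEssInfSet {Ω : Type*} {mΩ : MeasurableSpace Ω} (μ : Measure Ω)
    (S : Set (Ω → ℝ)) (p : Ω → EReal) : Prop :=
  Measurable[mΩ] p ∧ (∀ f ∈ S, ∀ᵐ ω ∂μ, p ω ≤ (f ω : EReal)) ∧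
    ∀ ζ : Ω → EReal, Measurable[mΩ] ζ → (∀ f ∈ S, ∀ᵐ ω ∂μ, ζ ω ≤ (f ω : EReal)) →
      ∀ᵐ ω ∂μ, ζ ω ≤ p ω

/-- The set of super-hedging prices of the claim `Z` in the one-period market `(y, Y)`. -/
def Prices {Ω : Type*} (H : MeasurableSpace Ω) {mΩ : MeasurableSpace Ω} (μ : Measure Ω)
    {d : ℕ} (y Y : Ω → Fin d → ℝ) (Z : Ω → ℝ) : Set (Ω → ℝ) :=
  {x | Measurable[H] x ∧ ∃ θ : Ω → Fin d → ℝ, Measurable[H] θ ∧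
    ∀ᵐ ω ∂μ, Z ω ≤ x ω + dotp (θ ω) fun i => Y ω i - y ω i}

/-- One-dimensional version of `Prices`. -/
def Prices1 {Ω : Type*} (H : MeasurableSpace Ω) {mΩ : MeasurableSpace Ω} (μ : Measure Ω)
    (y Y : Ω → ℝ) (Z : Ω → ℝ) : Set (Ω → ℝ) :=
  {x | Measurable[H] x ∧ ∃ θ : Ω → ℝ, Measurable[H] θ ∧
    ∀ᵐ ω ∂μ, Z ω ≤ x ω + θ ω * (Y ω - y ω)}

/-- One-period super-hedging prices of the zero claim in the market extended by the
additional asset `(pZ, Z)`. -/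
def PricesExt {Ω : Type*} (H : MeasurableSpace Ω) {mΩ : MeasurableSpace Ω} (μ : Measure Ω)
    {d : ℕ} (y Y : Ω → Fin d → ℝ) (Z pZ : Ω → ℝ) : Set (Ω → ℝ) :=
  {x | Measurable[H] x ∧ ∃ α : Ω → ℝ, Measurable[H] α ∧ ∃ θ : Ω → Fin d → ℝ,
    Measurable[H] θ ∧
    ∀ᵐ ω ∂μ, 0 ≤ x ω + α ω * (Z ω - pZ ω) + dotp (θ ω) fun i => Y ω i - y ω i}

/-- The function `f = -g + δ_{D}` of the paper, valued in `EReal`. -/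
def fObj {Ω : Type*} {d : ℕ} (g : Ω → (Fin d → ℝ) → ℝ) (D : Ω → Set (Fin d → ℝ))
    (ω : Ω) (z : Fin d → ℝ) : EReal :=
  if z ∈ D ω then ((-(g ω z) : ℝ) : EReal) else ⊤

/-- Fenchel–Legendre conjugate of an `EReal`-valued function on `ℝ^d`. -/
def eConj {d : ℕ} (f : (Fin d → ℝ) → EReal) (x : Fin d → ℝ) : EReal :=
  ⨆ z : Fin d → ℝ, ((dotp x z : ℝ) : EReal) - f z

/-- Convex-analytic indicator function `δ_s`. -/
def indicatorE {E : Type*} (s : Set E) (x : E) : EReal := if x ∈ s then 0 else ⊤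

/-- Relative concave envelope of `g` with respect to `D`. -/
def concEnv {d : ℕ} (g : (Fin d → ℝ) → ℝ) (D : Set (Fin d → ℝ)) (x : Fin d → ℝ) : EReal :=
  ⨅ v ∈ {v : (Fin d → ℝ) → ℝ | ConcaveOn ℝ univ v ∧ ∀ z ∈ D, g z ≤ v z}, ((v x : ℝ) : EReal)

/-- Upper semicontinuous closure of an `EReal`-valued function. -/
def usClosure {E : Type*} [TopologicalSpace E] (F : E → EReal) (x : E) : EReal :=
  Filter.limsup F (nhds x)

/-- The slope `θ^*` of Corollary 2.19, with the conventions of the paper. -/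
def thetaStar (g : ℝ → ℝ) (M I : ℝ) (S : EReal) : ℝ :=
  if S = (I : EReal) then 0 else if S = ⊤ then M
  else (g S.toReal - g I) / (S.toReal - I)

/-- Multi-period super-hedging prices at time `t` of the claim `g` paid at time `T`. -/
def PricesMulti {Ω : Type*} {mΩ : MeasurableSpace Ω} (𝓕 : ℕ → MeasurableSpace Ω)
    (μ : Measure Ω) {d : ℕ} (S : ℕ → Ω → Fin d → ℝ) (t T : ℕ) (g : Ω → ℝ) :
    Set (Ω → ℝ) :=
  {x | Measurable[𝓕 t] x ∧ ∃ θ : ℕ → Ω → Fin d → ℝ, (∀ u, Measurable[𝓕 u] (θ u)) ∧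
    ∃ ε : Ω → ℝ, Measurable[𝓕 T] ε ∧ (∀ᵐ ω ∂μ, 0 ≤ ε ω) ∧
    ∀ᵐ ω ∂μ, x ω + (∑ u ∈ Finset.Icc (t+1) T,
      dotp (θ (u-1) ω) fun i => S u ω i - S (u-1) ω i) - ε ω = g ω}

/-- One-step super-hedging prices at time `t` of the (extended-real) claim `G`
paid at time `t+1`. -/
def OneStepPrices {Ω : Type*} {mΩ : MeasurableSpace Ω} (𝓕 : ℕ → MeasurableSpace Ω)
    (μ : Measure Ω) {d : ℕ} (S : ℕ → Ω → Fin d → ℝ) (t : ℕ) (G : Ω → EReal) :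
    Set (Ω → ℝ) :=
  {x | Measurable[𝓕 t] x ∧ ∃ θ : Ω → Fin d → ℝ, Measurable[𝓕 t] θ ∧
    ∀ᵐ ω ∂μ, G ω ≤ ((x ω + dotp (θ ω) fun i => S (t+1) ω i - S t ω i : ℝ) : EReal)}

/-- Multi-period super-hedging prices in the market extended by the additional asset `C`. -/
def PricesMultiExt {Ω : Type*} {mΩ : MeasurableSpace Ω} (𝓕 : ℕ → MeasurableSpace Ω)
    (μ : Measure Ω) {d : ℕ} (S : ℕ → Ω → Fin d → ℝ) (C : ℕ → Ω → ℝ) (t T : ℕ)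
    (g : Ω → ℝ) : Set (Ω → ℝ) :=
  {x | Measurable[𝓕 t] x ∧ ∃ θ : ℕ → Ω → Fin d → ℝ, (∀ u, Measurable[𝓕 u] (θ u)) ∧
    ∃ α : ℕ → Ω → ℝ, (∀ u, Measurable[𝓕 u] (α u)) ∧
    ∃ ε : Ω → ℝ, Measurable[𝓕 T] ε ∧ (∀ᵐ ω ∂μ, 0 ≤ ε ω) ∧
    ∀ᵐ ω ∂μ, x ω + (∑ u ∈ Finset.Icc (t+1) T,
      ((dotp (θ (u-1) ω) fun i => S u ω i - S (u-1) ω i) +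
        α (u-1) ω * (C u ω - C (u-1) ω))) - ε ω = g ω}

/-- The set `R_t^T` of claims super-replicable at zero cost, one-dimensional case. -/
def RsetM {Ω : Type*} {mΩ : MeasurableSpace Ω} (𝓕 : ℕ → MeasurableSpace Ω)
    (μ : Measure Ω) (S : ℕ → Ω → ℝ) (t T : ℕ) : Set (Ω → ℝ) :=
  {X | ∃ θ : ℕ → Ω → ℝ, (∀ u, Measurable[𝓕 u] (θ u)) ∧
    ∃ ε : Ω → ℝ, Measurable[𝓕 T] ε ∧ (∀ᵐ ω ∂μ, 0 ≤ ε ω) ∧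
    ∀ᵐ ω ∂μ, X ω = (∑ u ∈ Finset.Icc (t+1) T, θ (u-1) ω * (S u ω - S (u-1) ω)) - ε ω}

/-- Closure with respect to convergence in probability. -/
def closureP {Ω : Type*} {mΩ : MeasurableSpace Ω} (μ : Measure Ω) (A : Set (Ω → ℝ)) :
    Set (Ω → ℝ) :=
  {X | ∃ f : ℕ → Ω → ℝ, (∀ n, f n ∈ A) ∧ TendstoInMeasure μ f Filter.atTop X}


section CondSuppAux

set_option linter.unusedSectionVars false

variable {Ω E : Type*} [TopologicalSpace E] [SecondCountableTopology E] [MeasurableSpace E]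
  [OpensMeasurableSpace E] (κ : Ω → Measure E) (ω : Ω)

lemma condSupp_isClosed : IsClosed (condSupp κ ω) :=
  isClosed_sInter fun _ hA => hA.1

lemma compl_condSupp_null [IsProbabilityMeasure (κ ω)] :
    κ ω (condSupp κ ω)ᶜ = 0 := by
  apply measure_null_of_locally_null
  intro x hx
  simp only [condSupp, mem_compl_iff, mem_sInter, not_forall] at hx
  obtain ⟨A, hA, hxA⟩ := hx
  rw [mem_setOf_eq] at hA
  refine ⟨Aᶜ, mem_nhdsWithin_of_mem_nhds (hA.1.isOpen_compl.mem_nhds hxA), ?_⟩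
  rw [measure_compl hA.1.measurableSet (measure_ne_top _ _), hA.2, measure_univ, tsub_self]

lemma mem_condSupp_iff [IsProbabilityMeasure (κ ω)] {z : E} :
    z ∈ condSupp κ ω ↔ ∀ U : Set E, IsOpen U → z ∈ U → κ ω U ≠ 0 := by
  constructor
  · intro hz U hU hzU h0
    have hA : κ ω Uᶜ = 1 := by
      rw [measure_compl hU.measurableSet (measure_ne_top _ _), h0, measure_univ, tsub_zero]
    exact (hz Uᶜ ⟨hU.isClosed_compl, hA⟩) hzU
  · intro hcond A hA
    by_contra hzA
    refine hcond Aᶜ hA.1.isOpen_compl hzA ?_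
    rw [measure_compl hA.1.measurableSet (measure_ne_top _ _), hA.2, measure_univ, tsub_self]

end CondSuppAux

lemma condLaw_section {Ω E : Type*} (H : MeasurableSpace Ω) {mΩ : MeasurableSpace Ω}
    [MeasurableSpace E] (hHF : H ≤ mΩ) (μ : Measure Ω) [IsProbabilityMeasure μ]
    (Y : Ω → E) (hY : Measurable[mΩ] Y) (κ : Ω → Measure E)
    (hprob : ∀ ω, IsProbabilityMeasure (κ ω))
    (hmeas : ∀ A : Set E, MeasurableSet A → Measurable[H] fun ω => κ ω A)
    (hlaw : ∀ A : Set E, MeasurableSet A → ∀ B : Set Ω, MeasurableSet[H] B →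
      ∫⁻ ω in B, κ ω A ∂μ = μ (B ∩ Y ⁻¹' A)) :
    ∀ ⦃B : Set (Ω × E)⦄, MeasurableSet[H.prod inferInstance] B →
      Measurable[H] (fun ω => κ ω (Prod.mk ω ⁻¹' B)) ∧
      ∫⁻ ω, κ ω (Prod.mk ω ⁻¹' B) ∂μ = μ ((fun ω => (ω, Y ω)) ⁻¹' B) := by
  have hYpair : Measurable[mΩ, H.prod inferInstance] (fun ω => (ω, Y ω)) :=
    Measurable.prodMk (measurable_id'' hHF) hY
  have hgen : (H.prod inferInstance : MeasurableSpace (Ω × E)) =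
      MeasurableSpace.generateFrom
        (image2 (· ×ˢ ·) {s : Set Ω | MeasurableSet[H] s} {t : Set E | MeasurableSet t}) :=
    (@generateFrom_prod Ω E H _).symm
  refine MeasurableSpace.induction_on_inter (m := H.prod inferInstance) hgen
    (@isPiSystem_prod Ω E H _) ?_ ?_ ?_ ?_
  · simp
  · rintro _ ⟨C, hC, A, hA, rfl⟩
    rw [mem_setOf_eq] at hC hA
    have hsec : (fun ω => κ ω (Prod.mk ω ⁻¹' (C ×ˢ A))) = C.indicator (fun ω => κ ω A) := by
      funext ω
      by_cases hω : ω ∈ C <;>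
        simp [Set.mk_preimage_prod_left_eq_if, hω, Set.indicator]
    constructor
    · rw [hsec]; exact (hmeas A hA).indicator hC
    · rw [hsec, lintegral_indicator (hHF _ hC), hlaw A hA C hC]
      congr 1
  · rintro B hB ⟨hm, hint⟩
    have hfs : ∀ ω : Ω, MeasurableSet (Prod.mk ω ⁻¹' B) := fun ω =>
      (@measurable_prodMk_left Ω E H _ ω) hB
    have hcompl : ∀ ω : Ω, κ ω (Prod.mk ω ⁻¹' Bᶜ) = 1 - κ ω (Prod.mk ω ⁻¹' B) := by
      intro ω
      haveI := hprob ω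
      have h' : Prod.mk ω ⁻¹' Bᶜ = (Prod.mk ω ⁻¹' B)ᶜ := rfl
      rw [h', measure_compl (hfs ω) (measure_ne_top _ _), measure_univ]
    constructor
    · simp only [hcompl]
      exact Measurable.const_sub hm 1
    · simp only [hcompl]
      have hle : ∀ ω, κ ω (Prod.mk ω ⁻¹' B) ≤ 1 := fun ω => by
        haveI := hprob ω; exact prob_le_one
    
      have hmono : Measurable[mΩ] (fun ω => κ ω (Prod.mk ω ⁻¹' B)) := hm.mono hHF le_rfl
      have hfin : ∫⁻ ω, κ ω (Prod.mk ω ⁻¹' B) ∂μ ≠ ⊤ := by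
        refine ne_of_lt (lt_of_le_of_lt (lintegral_mono hle) ?_)
        simp [lintegral_one]
      rw [lintegral_sub hmono hfin (Filter.Eventually.of_forall hle), lintegral_one,
        measure_univ, hint]
      have : (fun ω => (ω, Y ω)) ⁻¹' Bᶜ = ((fun ω => (ω, Y ω)) ⁻¹' B)ᶜ := rfl
      rw [this, measure_compl (hYpair hB) (measure_ne_top _ _), measure_univ]
  · rintro f hdisj hfm hC
    have hsec : ∀ ω : Ω, Prod.mk ω ⁻¹' (⋃ i, f i) = ⋃ i, Prod.mk ω ⁻¹' (f i) := fun ω => by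
      simp [Set.preimage_iUnion]
    have hκsum : ∀ ω : Ω, κ ω (Prod.mk ω ⁻¹' (⋃ i, f i)) = ∑' i, κ ω (Prod.mk ω ⁻¹' (f i)) := by
      intro ω
      rw [hsec ω]
      exact measure_iUnion
        (fun i j hij => Disjoint.preimage _ (hdisj hij))
        (fun i => (@measurable_prodMk_left Ω E H _ ω) (hfm i))
    constructor
    · simp only [hκsum]
      exact Measurable.ennreal_tsum fun i => (hC i).1
    · simp only [hκsum]
      rw [lintegral_tsum fun i => ((hC i).1.mono hHF le_rfl).aemeasurable]
      have : (fun ω => (ω, Y ω)) ⁻¹' (⋃ i, f i) = ⋃ i, (fun ω => (ω, Y ω)) ⁻¹' (f i) := by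
        simp [Set.preimage_iUnion]
      rw [this, measure_iUnion (fun i j hij => Disjoint.preimage _ (hdisj hij))
        (fun i => hYpair (hfm i))]
      exact tsum_congr fun i => (hC i).2

/-- the one-step conditional essential supremum of `g(Y) - θ·Y` equals
the supremum over the conditional support of `Y`, which is the Fenchel–Legendre
conjugate `f^*(-θ)` of `f = -g + δ_{supp_H Y}`. -/
theorem condEssSup_eq_fenchel_conjugate
    {Ω : Type*} (H : MeasurableSpace Ω) [mΩ : MeasurableSpace Ω] (μ : Measure Ω)
    [IsProbabilityMeasure μ] [μ.IsComplete] (hHF : H ≤ mΩ)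
    (hHcomp : ∀ s : Set Ω, μ s = 0 → MeasurableSet[H] s)
    {d : ℕ} (y Y : Ω → Fin d → ℝ)
    (hy : Measurable[H] y) (hY : Measurable[mΩ] Y)
    (hy0 : ∀ ω i, 0 ≤ y ω i) (hY0 : ∀ ω i, 0 ≤ Y ω i)
    (κ : Ω → Measure (Fin d → ℝ)) (hκ : CondLaw H μ Y κ)
    (hYsupp : ∀ ω, Y ω ∈ condSupp κ ω)
    (g : Ω → (Fin d → ℝ) → ℝ)
    (hgmeas : Measurable[H.prod inferInstance] fun p : Ω × (Fin d → ℝ) => g p.1 p.2)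
    (hglsc : ∀ ω, LowerSemicontinuous (g ω))
    (θ : Ω → Fin d → ℝ) (hθ : Measurable[H] θ)
    (γ : Ω → EReal)
    (hγ : IsCondEssSup H μ (fun ω => g ω (Y ω) - dotp (θ ω) (Y ω)) γ) :
    ∀ᵐ ω ∂μ,
      γ ω = sSup ((fun z => ((g ω z - dotp (θ ω) z : ℝ) : EReal)) '' condSupp κ ω) ∧
      γ ω = eConj (fObj g (condSupp κ) ω) (-(θ ω)) := by
  obtain ⟨hγmeas, hγle, hγmin⟩ := hγ
  have hθi : ∀ i, Measurable[H] fun ω => θ ω i := fun i => (measurable_pi_apply i).comp hθ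
  have hdotmeas : Measurable[H.prod inferInstance]
      fun p : Ω × (Fin d → ℝ) => dotp (θ p.1) p.2 := by
    unfold dotp
    apply Finset.measurable_sum
    intro i _
    exact ((hθi i).comp measurable_fst).mul ((measurable_pi_apply i).comp measurable_snd)
  have hpairmeas : Measurable[H.prod inferInstance]
      (fun p : Ω × (Fin d → ℝ) => g p.1 p.2 - dotp (θ p.1) p.2) := hgmeas.sub hdotmeas
  have hdotcont : ∀ ω, Continuous fun z : Fin d → ℝ => dotp (θ ω) z := by
    intro ω; unfold dotp
    exact continuous_finset_sum _ fun i _ => continuous_const.mul (continuous_apply i)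
  have hlsc : ∀ ω, LowerSemicontinuous fun z => g ω z - dotp (θ ω) z := by
    intro ω
    simp only [sub_eq_add_neg]
    exact (hglsc ω).add ((hdotcont ω).neg.lowerSemicontinuous)
  have hlscE : ∀ ω, LowerSemicontinuous fun z => ((g ω z - dotp (θ ω) z : ℝ) : EReal) :=
    fun ω => continuous_coe_real_ereal.comp_lowerSemicontinuous (hlsc ω)
      fun a b hab => EReal.coe_le_coe_iff.2 hab
  have key := condLaw_section H hHF μ Y hY κ hκ.isProb hκ.meas hκ.law
  set D : Ω → Set (Fin d → ℝ) := condSupp κ with hD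
  set S : Ω → EReal :=
    fun ω => sSup ((fun z => ((g ω z - dotp (θ ω) z : ℝ) : EReal)) '' D ω) with hS
  -- Step A : S ≤ γ a.e.
  have hB₁ : MeasurableSet[H.prod inferInstance]
      {p : Ω × (Fin d → ℝ) | γ p.1 < ((g p.1 p.2 - dotp (θ p.1) p.2 : ℝ) : EReal)} :=
    measurableSet_lt (hγmeas.comp measurable_fst) (measurable_coe_real_ereal.comp hpairmeas)
  obtain ⟨hm₁, hint₁⟩ := key hB₁
  have haeκ : ∀ᵐ ω ∂μ,
      κ ω {z | γ ω < ((g ω z - dotp (θ ω) z : ℝ) : EReal)} = 0 := by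
    have h0 : ∫⁻ ω, κ ω (Prod.mk ω ⁻¹'
        {p : Ω × (Fin d → ℝ) | γ p.1 < ((g p.1 p.2 - dotp (θ p.1) p.2 : ℝ) : EReal)}) ∂μ
        = 0 := by
      rw [hint₁]
      have := ae_iff.1 hγle
      simpa [not_le, Set.preimage_setOf_eq] using this
    have := (lintegral_eq_zero_iff (hm₁.mono hHF le_rfl)).1 h0
    filter_upwards [this] with ω hω
    exact hω
  have hSleγ : ∀ᵐ ω ∂μ, S ω ≤ γ ω := by
    filter_upwards [haeκ] with ω hω
    haveI := hκ.isProb ω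
    have hopen : IsOpen {z | γ ω < ((g ω z - dotp (θ ω) z : ℝ) : EReal)} :=
      lowerSemicontinuous_iff_isOpen_preimage.1 (hlscE ω) (γ ω)
    have hcompl : {z | ((g ω z - dotp (θ ω) z : ℝ) : EReal) ≤ γ ω}
        = {z | γ ω < ((g ω z - dotp (θ ω) z : ℝ) : EReal)}ᶜ := by
      ext z; simp [not_lt]
    have hfull : κ ω {z | ((g ω z - dotp (θ ω) z : ℝ) : EReal) ≤ γ ω} = 1 := by
      rw [hcompl, measure_compl hopen.measurableSet (measure_ne_top _ _), hω,
        measure_univ, tsub_zero]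
    have hsub : D ω ⊆ {z | ((g ω z - dotp (θ ω) z : ℝ) : EReal) ≤ γ ω} := by
      apply sInter_subset_of_mem
      refine ⟨?_, hfull⟩
      rw [hcompl]; exact hopen.isClosed_compl
    refine sSup_le ?_
    rintro x ⟨z, hzD, rfl⟩
    exact hsub hzD
  -- Step B : ζ
  have hBq : ∀ q : ℚ, MeasurableSet[H.prod inferInstance]
      {p : Ω × (Fin d → ℝ) | (q : ℝ) < g p.1 p.2 - dotp (θ p.1) p.2} :=
    fun q => measurableSet_lt measurable_const hpairmeas
  set ζ : Ω → EReal := fun ω => ⨆ q : ℚ,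
    if κ ω {z | (q : ℝ) < g ω z - dotp (θ ω) z} = 0 then (⊥ : EReal) else ((q : ℝ) : EReal)
    with hζdef
  have hζmeas : Measurable[H] ζ := by
    apply Measurable.iSup
    intro q
    have hmq : Measurable[H] fun ω =>
        κ ω {z | (q : ℝ) < g ω z - dotp (θ ω) z} := (key (hBq q)).1
    exact Measurable.ite (hmq (measurableSet_singleton 0)) measurable_const measurable_const
  have hζS : ∀ ω, ζ ω = S ω := by
    intro ω
    haveI := hκ.isProb ω
    apply le_antisymm
    · refine iSup_le fun q => ?_
      split_ifs with hq0
      · exact bot_le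
      · have hne : ({z | (q : ℝ) < g ω z - dotp (θ ω) z} ∩ D ω).Nonempty := by
          rw [Set.nonempty_iff_ne_empty]
          intro hemp
          apply hq0
          have hsub : {z | (q : ℝ) < g ω z - dotp (θ ω) z} ⊆ (D ω)ᶜ :=
            Set.subset_compl_iff_disjoint_right.2 (Set.disjoint_iff_inter_eq_empty.2 hemp)
          exact le_antisymm
            (le_trans (measure_mono hsub) (le_of_eq (compl_condSupp_null κ ω))) (zero_le)
        obtain ⟨z, hz1, hz2⟩ := hne
        calc ((q : ℝ) : EReal) ≤ ((g ω z - dotp (θ ω) z : ℝ) : EReal) :=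
              EReal.coe_le_coe_iff.2 (le_of_lt hz1)
          _ ≤ S ω := le_sSup (Set.mem_image_of_mem _ hz2)
    · refine sSup_le ?_
      rintro x ⟨z, hzD, rfl⟩
      by_contra hlt
      rw [not_le] at hlt
      obtain ⟨q, h1, h2⟩ := EReal.exists_rat_btwn_of_lt hlt
      have hU : IsOpen {z' | (q : ℝ) < g ω z' - dotp (θ ω) z'} :=
        lowerSemicontinuous_iff_isOpen_preimage.1 (hlsc ω) (q : ℝ)
      have hzU : z ∈ {z' | (q : ℝ) < g ω z' - dotp (θ ω) z'} := EReal.coe_lt_coe_iff.1 h2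
      have hκU : κ ω {z' | (q : ℝ) < g ω z' - dotp (θ ω) z'} ≠ 0 :=
        (mem_condSupp_iff κ ω).1 hzD _ hU hzU
      have hqle : ((q : ℝ) : EReal) ≤ ζ ω := by
        have hle := le_iSup (fun q : ℚ =>
          if κ ω {z | (q : ℝ) < g ω z - dotp (θ ω) z} = 0 then (⊥ : EReal)
          else ((q : ℝ) : EReal)) q
        rwa [if_neg hκU] at hle
      exact absurd h1 (not_lt.2 hqle)
  -- Step C : γ ≤ ζ = S a.e.
  have hbound : ∀ᵐ ω ∂μ,
      ((g ω (Y ω) - dotp (θ ω) (Y ω) : ℝ) : EReal) ≤ ζ ω := by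
    refine Filter.Eventually.of_forall fun ω => ?_
    rw [hζS ω]
    exact le_sSup (Set.mem_image_of_mem _ (hYsupp ω))
  have hγleζ := hγmin ζ hζmeas hbound
  -- Step D : S ω = eConj (fObj g D ω) (-(θ ω)) pointwise
  have hconj : ∀ ω, S ω = eConj (fObj g (condSupp κ) ω) (-(θ ω)) := by
    intro ω
    have hpt : ∀ z, ((dotp (-(θ ω)) z : ℝ) : EReal) - fObj g (condSupp κ) ω z =
        if z ∈ D ω then ((g ω z - dotp (θ ω) z : ℝ) : EReal) else (⊥ : EReal) := by
      intro z
      have hneg : dotp (-(θ ω)) z = -(dotp (θ ω) z) := by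
        simp [dotp, neg_mul, ← Finset.sum_neg_distrib]
      unfold fObj
      split_ifs with hz
      · rw [← EReal.coe_sub]
        exact congrArg Real.toEReal (by rw [hneg]; ring)
      · exact EReal.sub_top _
    unfold eConj
    simp only [hpt]
    apply le_antisymm
    · refine sSup_le ?_
      rintro x ⟨z, hzD, rfl⟩
      refine le_trans ?_ (le_iSup _ z)
      rw [if_pos hzD]
    · refine iSup_le fun z => ?_
      split_ifs with hz
      · exact le_sSup (Set.mem_image_of_mem _ hz)
      · exact bot_le
  filter_upwards [hSleγ, hγleζ] with ω h1 h2
  have h2' : γ ω ≤ S ω := by rwa [hζS ω] at h2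
  have heq : γ ω = S ω := le_antisymm h2' h1
  exact ⟨heq, heq.trans (hconj ω)⟩
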